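/- Let F be a field in which -1 is a square, i.e. there exists i ∈ F with i² = -1. If every polynomial over F of prime degree has a root in F, and every element of F has a square root in F, then F is algebraically closed. -/

import Mathlib

open Polynomial IntermediateField Module

lemma sg_lemma (S : Finset ℕ) (hS : ∀ s ∈ S, 0 < s) :
    ∃ N : ℕ, ∀ n ≥ N, S.gcd id ∣ n → n ∈ AddSubmonoid.closure (S : Set ℕ) := by
  classical
  induction S using Finset.induction with
  | empty =>
    exact ⟨1, fun n hn hd => by simp [Finset.gcd_empty] at hd; omega⟩
  | @insert a S ha IH =>
    have hapos : 0 < a := hS a (Finset.mem_insert_self a S)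
    have hSpos : ∀ s ∈ S, 0 < s := fun s hs => hS s (Finset.mem_insert_of_mem hs)
    obtain ⟨N', hN'⟩ := IH hSpos
    set g' : ℕ := S.gcd id with hg'
    have hgcd : (insert a S).gcd id = Nat.gcd a g' := by
      rw [Finset.gcd_insert]; rfl
    have hmemcl : ∀ m : ℕ, g' ∣ m → m ≥ N' →
        m ∈ AddSubmonoid.closure ((insert a S : Finset ℕ) : Set ℕ) := by
      intro m hdvd hge
      have h1 : m ∈ AddSubmonoid.closure (S : Set ℕ) := hN' m hge hdvd
      refine AddSubmonoid.closure_mono ?_ h1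
      intro x hx; simp at hx ⊢; tauto
    have hacl : a ∈ AddSubmonoid.closure ((insert a S : Finset ℕ) : Set ℕ) :=
      AddSubmonoid.subset_closure (by simp)
    by_cases hg0 : g' = 0
    · refine ⟨0, fun n hn hd => ?_⟩
      rw [hgcd, hg0, Nat.gcd_zero_right] at hd
      obtain ⟨k, rfl⟩ := hd
      simpa [smul_eq_mul, mul_comm] using AddSubmonoid.nsmul_mem _ hacl k
    · have hg'pos : 0 < g' := Nat.pos_of_ne_zero hg0
      refine ⟨N' + a * g', fun n hn hd => ?_⟩
      rw [hgcd] at hd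
      set d : ℕ := Nat.gcd a g' with hdd
      have hbez : (d : ℤ) = a * Nat.gcdA a g' + g' * Nat.gcdB a g' := Nat.gcd_eq_gcd_ab a g'
      set z : ℤ := ((n / d : ℕ) : ℤ) * Nat.gcdA a g' with hz
      set x : ℤ := z % (g' : ℤ) with hx
      have hg'z : (0 : ℤ) < (g' : ℤ) := by exact_mod_cast hg'pos
      have hx0 : 0 ≤ x := Int.emod_nonneg z (by positivity)
      have hxlt : x < g' := Int.emod_lt_of_pos z hg'z
      have hnd : ((n / d : ℕ) : ℤ) * d = n := by
        have := Nat.div_mul_cancel hd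
        exact_mod_cast this
      have hcong : (g' : ℤ) ∣ (n : ℤ) - a * x := by
        have h1 : (g' : ℤ) ∣ a * z - a * x := by
          have hzz : (g' : ℤ) ∣ z - x := by
            have hdm := Int.mul_ediv_add_emod z (g' : ℤ)
            exact ⟨z / g', by rw [hx]; linarith⟩
          have : a * z - a * x = a * (z - x) := by ring
          rw [this]
          exact Dvd.dvd.mul_left hzz a
        have h2 : (g' : ℤ) ∣ (n : ℤ) - a * z := by
          have heq : (n : ℤ) - a * z = ((n / d : ℕ) : ℤ) * (g' * Nat.gcdB a g') := by
            rw [hz]; nlinarith [hbez, hnd]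
          rw [heq]
          exact ⟨((n / d : ℕ) : ℤ) * Nat.gcdB a g', by ring⟩
        have := dvd_add h2 h1
        have heq2 : (n : ℤ) - a * z + (a * z - a * x) = (n : ℤ) - a * x := by ring
        rwa [heq2] at this
      have hax_le : (a : ℤ) * x ≤ a * g' := by
        have hxg : x ≤ (g' : ℤ) := le_of_lt hxlt
        have ha' : (0:ℤ) ≤ a := by positivity
        nlinarith
      have hagn : (a : ℤ) * g' + N' ≤ n := by exact_mod_cast by omega
      have hm_nonneg : (0 : ℤ) ≤ (n : ℤ) - a * x := by linarith
      set m : ℕ := ((n : ℤ) - a * x).toNat with hm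
      have hmZ : (m : ℤ) = (n : ℤ) - a * x := Int.toNat_of_nonneg hm_nonneg
      have hgm : g' ∣ m := by
        have h3 : (g' : ℤ) ∣ (m : ℤ) := by rw [hmZ]; exact hcong
        exact_mod_cast h3
      have hge : m ≥ N' := by
        have h4 : (N' : ℤ) ≤ m := by rw [hmZ]; linarith
        exact_mod_cast h4
      have hmem : m ∈ AddSubmonoid.closure ((insert a S : Finset ℕ) : Set ℕ) := hmemcl m hgm hge
      have hxn : x.toNat * a + m = n := by
        have hxZ : (x.toNat : ℤ) = x := Int.toNat_of_nonneg hx0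
        have h5 : (x.toNat : ℤ) * a + m = n := by rw [hxZ, hmZ]; ring
        exact_mod_cast h5
      have hxa : x.toNat * a ∈ AddSubmonoid.closure ((insert a S : Finset ℕ) : Set ℕ) := by
        simpa [smul_eq_mul] using AddSubmonoid.nsmul_mem _ hacl x.toNat
      have := AddSubmonoid.add_mem _ hxa hmem
      rwa [hxn] at this

lemma irred_no_root {F : Type*} [Field F] {g : F[X]} (hg : Irreducible g)
    (h2 : 2 ≤ g.natDegree) (a : F) : g.eval a ≠ 0 := by
  intro h
  obtain ⟨c, hc⟩ := Polynomial.dvd_iff_isRoot.mpr h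
  rcases hg.isUnit_or_isUnit hc with hu | hu
  · exact Polynomial.not_isUnit_X_sub_C a hu
  · have : g.natDegree = 1 := by
      rw [hc, Polynomial.natDegree_mul (Polynomial.X_sub_C_ne_zero a)
        (fun h0 => by simp [h0] at hu), Polynomial.natDegree_X_sub_C,
        Polynomial.natDegree_eq_zero_of_isUnit hu]
    omega

lemma key_no_irred (F : Type*) [Field F]
    (hroots : ∀ f : Polynomial F, f.natDegree.Prime → ∃ a : F, f.eval a = 0)
    (p : F[X]) (hmon : p.Monic) (hirr : Irreducible p) (h2 : 2 ≤ p.natDegree) : False := by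
  classical
  -- the monoid of degrees of monic polynomials with no root
  set M : AddSubmonoid ℕ :=
    { carrier := {n | ∃ f : F[X], f.Monic ∧ f.natDegree = n ∧ ∀ a : F, f.eval a ≠ 0}
      zero_mem' := ⟨1, monic_one, natDegree_one, fun a => by simp⟩
      add_mem' := by
        rintro m n ⟨f, hf, rfl, hfr⟩ ⟨g, hg, rfl, hgr⟩
        exact ⟨f * g, hf.mul hg, natDegree_mul hf.ne_zero hg.ne_zero,
          fun a h => by
            rw [eval_mul, mul_eq_zero] at h
            rcases h with h | h
            exacts [hfr a h, hgr a h]⟩ } with hM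
  have hMprime : ∀ n ∈ M, ¬ n.Prime := by
    rintro n ⟨f, hf, rfl, hfr⟩ hp
    obtain ⟨a, ha⟩ := hroots f hp
    exact hfr a ha
  have hMirr : ∀ g : F[X], g.Monic → Irreducible g → 2 ≤ g.natDegree → g.natDegree ∈ M :=
    fun g hg hgi hg2 => ⟨g, hg, rfl, irred_no_root hgi hg2⟩
  -- F is perfect
  haveI : PerfectField F := by
    obtain ⟨c, hc⟩ := CharP.exists F
    rcases CharP.char_is_prime_or_zero F c with hcp | hc0
    · haveI : Fact c.Prime := ⟨hcp⟩
      haveI : ExpChar F c := ExpChar.prime hcp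
      haveI : PerfectRing F c := by
        refine PerfectRing.ofSurjective F c fun a => ?_
        have hdeg : (X ^ c - C a).natDegree = c := by
          rw [natDegree_X_pow_sub_C]
        obtain ⟨b, hb⟩ := hroots (X ^ c - C a) (by rw [hdeg]; exact hcp)
        refine ⟨b, ?_⟩
        have : b ^ c - a = 0 := by simpa using hb
        simpa [frobenius_def] using sub_eq_zero.mp this
      exact PerfectRing.toPerfectField F c
    · subst hc0
      haveI : CharZero F := CharP.charP_to_charZero F
      infer_instance
  -- the splitting field
  set K := p.SplittingField with hK
  haveI : FiniteDimensional F K := inferInstance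
  haveI : IsGalois F K := ⟨⟩
  set G := K ≃ₐ[F] K with hG
  set n := finrank F K with hn
  have hcardG : Fintype.card G = n := by
    rw [← Nat.card_eq_fintype_card]; exact IsGalois.card_aut_eq_finrank F K
  -- each subgroup gives an element of M (or a trivial extension)
  have hsub : ∀ H : Subgroup G, finrank F (fixedField H) * Fintype.card H = n := by
    intro H
    have h1 : finrank (fixedField H) K = Fintype.card H := by
      rw [← Nat.card_eq_fintype_card]; exact IntermediateField.finrank_fixedField_eq_card H
    have h2 : finrank F (fixedField H) * finrank (fixedField H) K = finrank F K :=
      finrank_mul_finrank F (fixedField H) K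
    rw [h1] at h2
    exact h2
  have hmem : ∀ H : Subgroup G, finrank F (fixedField H) = 1 ∨ finrank F (fixedField H) ∈ M := by
    intro H
    set L := fixedField H with hL
    obtain ⟨α, hα⟩ := Field.exists_primitive_element F L
    have hint : IsIntegral F α := IsIntegral.of_finite F α
    have hdeg : (minpoly F α).natDegree = finrank F L := by
      rw [← IntermediateField.adjoin.finrank hint, hα, IntermediateField.finrank_top']
    by_cases h1 : finrank F L = 1
    · exact Or.inl h1
    · right
      have hpos : 0 < finrank F L := finrank_pos
      have h2' : 2 ≤ (minpoly F α).natDegree := by omega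
      rw [← hdeg]
      exact hMirr _ (minpoly.monic hint) (minpoly.irreducible hint) h2'
  -- n ≥ 2
  have hsplits : Splits (p.map (algebraMap F K)) := SplittingField.splits p
  obtain ⟨β, hβ⟩ := Splits.exists_eval_eq_zero hsplits
    (fun h => by
      rw [degree_map] at h
      rw [degree_eq_natDegree hmon.ne_zero] at h
      have : p.natDegree = 0 := by exact_mod_cast h
      omega)
  have hβ' : (Polynomial.aeval β) p = 0 := by rwa [aeval_def, eval₂_eq_eval_map]
  have hminβ : minpoly F β = p := (minpoly.eq_of_irreducible_of_monic hirr hβ' hmon).symm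
  have hdegβ : finrank F F⟮β⟯ = p.natDegree := by
    rw [IntermediateField.adjoin.finrank (IsIntegral.of_finite F β), hminβ]
  have hdn : finrank F F⟮β⟯ * finrank F⟮β⟯ K = n := finrank_mul_finrank F F⟮β⟯ K
  have hposK : 0 < finrank F⟮β⟯ K := finrank_pos
  have hn2 : 2 ≤ n := by nlinarith [hdegβ, hdn, hposK, h2]
  have hn0 : n ≠ 0 := by omega
  -- subgroups of prime power order
  have hsylow : ∀ (q : ℕ), q.Prime → ∀ k : ℕ, q ^ k ∣ n → (n / q ^ k = 1) ∨ (n / q ^ k) ∈ M := by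
    intro q hq k hdvd
    haveI : Fact q.Prime := ⟨hq⟩
    obtain ⟨H, hH⟩ := Sylow.exists_subgroup_card_pow_prime (G := G) q
      (by rw [Nat.card_eq_fintype_card, hcardG]; exact hdvd)
    rw [Nat.card_eq_fintype_card] at hH
    have := hsub H
    rw [hH] at this
    have heq : n / q ^ k = finrank F (fixedField H) :=
      Nat.div_eq_of_eq_mul_left (Nat.pow_pos (n := k) hq.pos) this.symm
    rcases hmem H with h | h
    · exact Or.inl (heq ▸ h)
    · exact Or.inr (heq ▸ h)
  -- case analysis
  by_cases hcase : ∃ q : ℕ, q.Prime ∧ q ∣ n ∧ ordCompl[q] n = 1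
  · -- n is a prime power: get an extension of degree q
    obtain ⟨q, hq, hqn, hord⟩ := hcase
    obtain ⟨ν, hν'⟩ : ∃ ν, n.factorization q = ν := ⟨_, rfl⟩
    have hν : 1 ≤ ν := hν' ▸ (Nat.Prime.dvd_iff_one_le_factorization hq hn0).mp hqn
    obtain ⟨m, hm⟩ := hν' ▸ Nat.ordProj_dvd n q
    rw [hν'] at hord
    have hqpos : 0 < q ^ (ν - 1) := Nat.pow_pos (n := ν - 1) hq.pos
    have h1 : m = 1 := by
      have h1' : n / q ^ ν = m := by
        rw [hm, Nat.mul_div_cancel_left _ (Nat.pow_pos (n := ν) hq.pos)]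
      rw [h1'] at hord; exact hord
    have hpow : q ^ ν = q ^ (ν - 1) * q := by
      rw [← pow_succ]; congr 1; omega
    have h2 : n / q ^ (ν - 1) = q := by
      rw [hm, h1, mul_one, hpow, Nat.mul_div_cancel_left _ hqpos]
    have hdvd : q ^ (ν - 1) ∣ n := by
      rw [hm]; exact Dvd.dvd.mul_right (pow_dvd_pow q (by omega)) m
    rcases hsylow q hq (ν - 1) hdvd with h | h
    · rw [h2] at h; exact hq.ne_one h
    · rw [h2] at h; exact hMprime q h hq
  · -- several primes: the ord_compls generate a full semigroup
    push_neg at hcase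
    set S : Finset ℕ := n.primeFactors.image (fun q => ordCompl[q] n) with hS
    have hSM : ∀ s ∈ S, s ∈ M := by
      intro s hs
      rw [hS, Finset.mem_image] at hs
      obtain ⟨q, hq, rfl⟩ := hs
      have hqp : q.Prime := Nat.prime_of_mem_primeFactors hq
      have hqd : q ∣ n := Nat.dvd_of_mem_primeFactors hq
      rcases hsylow q hqp (n.factorization q) (Nat.ordProj_dvd n q) with h | h
      · exact absurd h (hcase q hqp hqd)
      · exact h
    have hSpos : ∀ s ∈ S, 0 < s := by
      intro s hs
      rw [hS, Finset.mem_image] at hs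
      obtain ⟨q, hq, rfl⟩ := hs
      exact Nat.ordCompl_pos q hn0
    have hSne : S.Nonempty := by
      obtain ⟨q, hq⟩ := (n.exists_prime_and_dvd (by omega))
      exact ⟨ordCompl[q] n, Finset.mem_image_of_mem _
        (Nat.mem_primeFactors.mpr ⟨hq.1, hq.2, hn0⟩)⟩
    have hgcd : S.gcd id = 1 := by
      by_contra hne
      obtain ⟨r, hr, hrd⟩ := Nat.exists_prime_and_dvd hne
      obtain ⟨s₀, hs₀⟩ := hSne
      have hrs₀ : r ∣ s₀ := hrd.trans (Finset.gcd_dvd hs₀)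
      have hrn : r ∣ n := by
        rw [hS, Finset.mem_image] at hs₀
        obtain ⟨q, hq, rfl⟩ := hs₀
        exact hrs₀.trans (Nat.ordCompl_dvd n q)
      have hrmem : ordCompl[r] n ∈ S :=
        Finset.mem_image_of_mem _ (Nat.mem_primeFactors.mpr ⟨hr, hrn, hn0⟩)
      have : r ∣ ordCompl[r] n := hrd.trans (Finset.gcd_dvd hrmem)
      exact Nat.not_dvd_ordCompl hr hn0 this
    obtain ⟨N, hN⟩ := sg_lemma S hSpos
    obtain ⟨P, hPN, hP⟩ := Nat.exists_infinite_primes N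
    have hPmem : P ∈ AddSubmonoid.closure (S : Set ℕ) := hN P hPN (hgcd ▸ one_dvd P)
    have hPM : P ∈ M := by
      have hle : AddSubmonoid.closure (S : Set ℕ) ≤ M :=
        AddSubmonoid.closure_le.mpr (fun s hs => hSM s hs)
      exact hle hPmem
    exact hMprime P hPM hP

/-- Case 2 of the proof of Theorem 3.1: if `-1` is a square in `F`, every polynomial of
prime degree over `F` has a root in `F`, and every element of `F` has a square root in
`F`, then `F` is algebraically closed. -/
theorem stmt_8 (F : Type*) [Field F] (i : F) (hi : i ^ 2 = -1)
    (hroots : ∀ f : Polynomial F, f.natDegree.Prime → ∃ a : F, f.eval a = 0)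
    (hsq : ∀ x : F, ∃ y : F, y ^ 2 = x) :
    IsAlgClosed F := by
  apply IsAlgClosed.of_exists_root
  intro q hmon hirr
  rcases lt_or_ge q.natDegree 2 with hlt | hge
  · interval_cases h : q.natDegree
    · exact absurd ((Polynomial.Monic.natDegree_eq_zero hmon).mp h ▸ hirr) (by
        intro hir
        exact hir.not_isUnit isUnit_one)
    · refine ⟨-(q.coeff 0), ?_⟩
      rw [Polynomial.Monic.eq_X_add_C hmon h]
      simp
  · exact absurd (key_no_irred F hroots q hmon hirr hge) (fun h => h)
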